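/- Let 0 < s ≤ 1/2 and 1/2 ≤ t ≤ 1−s. Then there is a constant c_{n,s} such that for every cube Q ⊂ ℝⁿ, every integer m ≥ 0, and every locally integrable function f, ∫_{2^m Q} |f(y) − m_f(t,Q)| dy ≤ c_{n,s} · (1 + m) · |2^m Q| · inf_{y ∈ Q} M♯f(y). -/

import Mathlib

open MeasureTheory ENNReal

namespace LocalMedian

/-- Euclidean space `ℝⁿ`. -/
abbrev Sp (n : ℕ) := EuclideanSpace ℝ (Fin n)

/-- An axis-parallel cube in `ℝⁿ`, given by its lower corner and (positive) sidelength. -/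
structure Cube (n : ℕ) where
  corner : Sp n
  side : ℝ
  side_pos : 0 < side

namespace Cube

variable {n : ℕ}

/-- The set of points of the cube. -/
def set (Q : Cube n) : Set (Sp n) :=
  {x | ∀ i, Q.corner i ≤ x i ∧ x i ≤ Q.corner i + Q.side}

/-- The center of the cube. -/
noncomputable def center (Q : Cube n) : Sp n := WithLp.toLp 2 (fun i => Q.corner i + Q.side / 2)

/-- The cube concentric with `Q` whose sidelength is `r` times that of `Q`. -/
noncomputable def dilate (Q : Cube n) (r : ℝ) (hr : 0 < r) : Cube n where
  corner := WithLp.toLp 2 (fun i => Q.center i - r * Q.side / 2)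
  side := r * Q.side
  side_pos := mul_pos hr Q.side_pos

/-- `Q` is a dyadic subcube of `Q₀`, i.e. obtained from `Q₀` by repeated dyadic
subdivision into `2ⁿ` congruent subcubes. -/
def dyadicSub (Q₀ Q : Cube n) : Prop :=
  ∃ (k : ℕ) (m : Fin n → ℕ), (∀ i, m i < 2 ^ k) ∧
    Q.side = Q₀.side / 2 ^ k ∧ ∀ i, Q.corner i = Q₀.corner i + Q.side * m i

/-- `Q` is one of the `2ⁿ` dyadic children of `P` (so `P` is the dyadic parent of `Q`). -/
def isDyadicChild (Q P : Cube n) : Prop :=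
  Q.side = P.side / 2 ∧ ∃ m : Fin n → ℕ, (∀ i, m i < 2) ∧
    ∀ i, Q.corner i = P.corner i + Q.side * m i

end Cube

variable {n : ℕ}

/-- The (maximal) median of `f` over the cube `Q` with parameter `t`:
`m_f(t,Q) = sup { M : |{y ∈ Q : f y < M}| ≤ t|Q| }`. -/
noncomputable def median (f : Sp n → ℝ) (t : ℝ) (Q : Cube n) : ℝ :=
  sSup {M : ℝ | volume {y ∈ Q.set | f y < M} ≤ ENNReal.ofReal t * volume Q.set}

/-- The local oscillation `inf_c inf {α ≥ 0 : |{y ∈ Q : |f y - c| > α}| < s|Q|}`. -/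
noncomputable def osc (f : Sp n → ℝ) (s : ℝ) (Q : Cube n) : ℝ :=
  ⨅ c : ℝ, sInf {α : ℝ | 0 ≤ α ∧
    volume {y ∈ Q.set | α < |f y - c|} < ENNReal.ofReal s * volume Q.set}

/-- The local sharp maximal function `M♯_{0,s,Q₀} f`, restricted to the cube `Q₀`. -/
noncomputable def sharpLoc (f : Sp n → ℝ) (s : ℝ) (Q₀ : Cube n) (x : Sp n) : ℝ≥0∞ :=
  ⨆ Q : {Q : Cube n // x ∈ Q.set ∧ Q.set ⊆ Q₀.set}, ENNReal.ofReal (osc f s Q.1)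

/-- The local sharp maximal function `M♯_{0,s} f` (over all cubes containing `x`). -/
noncomputable def sharp (f : Sp n → ℝ) (s : ℝ) (x : Sp n) : ℝ≥0∞ :=
  ⨆ Q : {Q : Cube n // x ∈ Q.set}, ENNReal.ofReal (osc f s Q.1)

/-- The Hardy–Littlewood maximal function (over cubes containing `x`). -/
noncomputable def maximal (f : Sp n → ℝ) (x : Sp n) : ℝ≥0∞ :=
  ⨆ Q : {Q : Cube n // x ∈ Q.set},
    (∫⁻ y in Q.1.set, ENNReal.ofReal |f y|) / volume Q.1.set

/-- The Hardy–Littlewood maximal function of an `ℝ≥0∞`-valued function. -/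
noncomputable def maximalE (g : Sp n → ℝ≥0∞) (x : Sp n) : ℝ≥0∞ :=
  ⨆ Q : {Q : Cube n // x ∈ Q.set}, (∫⁻ y in Q.1.set, g y) / volume Q.1.set

/-- The average `(1/|Q|) ∫_Q g`. -/
noncomputable def cubeAvg (g : Sp n → ℝ) (Q : Cube n) : ℝ :=
  (volume Q.set).toReal⁻¹ * ∫ y in Q.set, g y

/-- The Fefferman–Stein sharp maximal function
`M♯ g(x) = sup_{Q ∋ x} (1/|Q|) ∫_Q |g - g_Q|`. -/
noncomputable def fsSharp (g : Sp n → ℝ) (x : Sp n) : ℝ≥0∞ :=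
  ⨆ Q : {Q : Cube n // x ∈ Q.set},
    ENNReal.ofReal (cubeAvg (fun y => |g y - cubeAvg g Q.1|) Q.1)



namespace Cube

lemma set_eq (Q : Cube n) : Q.set =
    (MeasurableEquiv.toLp 2 (Fin n → ℝ)).symm ⁻¹'
      (Set.univ.pi fun i => Set.Icc (Q.corner i) (Q.corner i + Q.side)) := by
  ext x
  simp only [set, Set.mem_setOf_eq, Set.mem_preimage, Set.mem_pi, Set.mem_univ, Set.mem_Icc,
    forall_true_left]
  rfl

lemma isCompact_set (Q : Cube n) : IsCompact Q.set := by
  have : Q.set = (EuclideanSpace.equiv (Fin n) ℝ).toHomeomorph ⁻¹'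
      (Set.univ.pi fun i => Set.Icc (Q.corner i) (Q.corner i + Q.side)) := Q.set_eq
  rw [this, Homeomorph.isCompact_preimage]
  exact isCompact_univ_pi fun i => isCompact_Icc

lemma measurableSet_set (Q : Cube n) : MeasurableSet Q.set := by
  rw [set_eq]
  exact (MeasurableEquiv.toLp 2 (Fin n → ℝ)).symm.measurable
    (MeasurableSet.univ_pi fun i => measurableSet_Icc)

lemma volume_set (Q : Cube n) : volume Q.set = ENNReal.ofReal (Q.side ^ n) := by
  rw [set_eq,
    (EuclideanSpace.volume_preserving_symm_measurableEquiv_toLp (Fin n)).measure_preimage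
      ((MeasurableSet.univ_pi fun i => measurableSet_Icc).nullMeasurableSet),
    volume_pi_pi]
  simp [Real.volume_Icc, ← ENNReal.ofReal_pow Q.side_pos.le]


lemma volume_set_pos (Q : Cube n) : 0 < volume Q.set := by
  rw [volume_set]; exact ENNReal.ofReal_pos.2 (pow_pos Q.side_pos n)

lemma volume_set_ne_top (Q : Cube n) : volume Q.set ≠ ⊤ := by
  rw [volume_set]; exact ENNReal.ofReal_ne_top

lemma toReal_volume_pos (Q : Cube n) : 0 < (volume Q.set).toReal :=
  ENNReal.toReal_pos Q.volume_set_pos.ne' Q.volume_set_ne_top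

lemma mem_set_iff_abs (Q : Cube n) (x : Sp n) :
    x ∈ Q.set ↔ ∀ i, |x i - Q.center i| ≤ Q.side / 2 := by
  unfold set center
  simp only [Set.mem_setOf_eq, abs_le]
  constructor <;> intro h i <;> have := h i <;> constructor <;> linarith [this.1, this.2]

lemma mem_dilate_iff (Q : Cube n) {r : ℝ} (hr : 0 < r) (x : Sp n) :
    x ∈ (Q.dilate r hr).set ↔ ∀ i, |x i - Q.center i| ≤ r * Q.side / 2 := by
  rw [mem_set_iff_abs]
  have hc : ∀ i, (Q.dilate r hr).center i = Q.center i := by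
    intro i; show (fun i => Q.center i - r * Q.side / 2) i + r * Q.side / 2 = Q.center i; ring
  have hside : (Q.dilate r hr).side = r * Q.side := rfl
  constructor <;> intro h i <;> have := h i <;> rw [hc i] at * <;> rw [hside] at * <;> linarith

lemma dilate_subset (Q : Cube n) {r r' : ℝ} (hr : 0 < r) (hr' : 0 < r') (h : r ≤ r') :
    (Q.dilate r hr).set ⊆ (Q.dilate r' hr').set := by
  intro x hx
  rw [mem_dilate_iff] at *
  intro i
  have := hx i
  nlinarith [Q.side_pos]

lemma dilate_one_set (Q : Cube n) {r : ℝ} (hr : 0 < r) (h : r = 1) :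
    (Q.dilate r hr).set = Q.set := by
  ext x
  rw [mem_dilate_iff, mem_set_iff_abs, h]
  simp

lemma subset_dilate (Q : Cube n) {r : ℝ} (hr : 0 < r) (h : 1 ≤ r) : Q.set ⊆ (Q.dilate r hr).set := by
  rw [← Q.dilate_one_set one_pos rfl]
  exact Q.dilate_subset one_pos hr h

lemma nonempty_set (Q : Cube n) : Q.set.Nonempty :=
  ⟨Q.center, (Q.mem_set_iff_abs _).2 fun i => by
    have : Q.center i - Q.center i = 0 := sub_self _
    rw [this, abs_zero]; linarith [Q.side_pos]⟩

end Cube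

section lemmas

variable {f : Sp n → ℝ} {Q : Cube n}

lemma cubeAvg_nonneg {g : Sp n → ℝ} (hg : ∀ y, 0 ≤ g y) (Q : Cube n) : 0 ≤ cubeAvg g Q :=
  mul_nonneg (inv_nonneg.2 ENNReal.toReal_nonneg) (integral_nonneg fun y => hg y)

lemma integral_eq_vol_mul_cubeAvg (g : Sp n → ℝ) (Q : Cube n) :
    ∫ y in Q.set, g y = (volume Q.set).toReal * cubeAvg g Q := by
  rw [cubeAvg, ← mul_assoc, mul_inv_cancel₀ Q.toReal_volume_pos.ne', one_mul]

lemma cubeAvg_congr_set {g : Sp n → ℝ} {Q Q' : Cube n} (h : Q.set = Q'.set) :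
    cubeAvg g Q = cubeAvg g Q' := by rw [cubeAvg, cubeAvg, h]

lemma ofReal_cubeAvg_le_fsSharp {y : Sp n} (hy : y ∈ Q.set) :
    ENNReal.ofReal (cubeAvg (fun z => |f z - cubeAvg f Q|) Q) ≤ fsSharp f y :=
  le_iSup (fun P : {P : Cube n // y ∈ P.set} =>
    ENNReal.ofReal (cubeAvg (fun z => |f z - cubeAvg f P.1|) P.1)) ⟨Q, hy⟩

/-- Chebyshev: `|{y ∈ Q : α ≤ |f y - c|}| ≤ (A/α) |Q|` where `A` is the average of `|f-c|`. -/
lemma cheb (hfi : IntegrableOn f Q.set volume) (c : ℝ) {α : ℝ} (hα : 0 < α) :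
    volume {y ∈ Q.set | α ≤ |f y - c|} ≤
      ENNReal.ofReal ((cubeAvg (fun y => |f y - c|) Q) / α) * volume Q.set := by
  set A := cubeAvg (fun y => |f y - c|) Q with hA
  set μ := volume.restrict Q.set
  have hint : Integrable (fun y => |f y - c|) μ := (hfi.sub (integrableOn_const Q.volume_set_ne_top)).abs
  have haem : AEMeasurable (fun y => ENNReal.ofReal |f y - c|) μ :=
    ENNReal.measurable_ofReal.comp_aemeasurable hint.aemeasurable
  have h1 : ENNReal.ofReal α * μ {y | ENNReal.ofReal α ≤ ENNReal.ofReal |f y - c|} ≤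
      ∫⁻ y, ENNReal.ofReal |f y - c| ∂μ := mul_meas_ge_le_lintegral₀ haem _
  have h2 : ∫⁻ y, ENNReal.ofReal |f y - c| ∂μ = ENNReal.ofReal ((volume Q.set).toReal * A) := by
    rw [← ofReal_integral_eq_lintegral_ofReal hint (Filter.Eventually.of_forall fun y => abs_nonneg _),
      integral_eq_vol_mul_cubeAvg]
  have hset : {y ∈ Q.set | α ≤ |f y - c|} =
      {y | ENNReal.ofReal α ≤ ENNReal.ofReal |f y - c|} ∩ Q.set := by
    ext y
    simp only [Set.mem_setOf_eq, Set.mem_inter_iff, ENNReal.ofReal_le_ofReal_iff (abs_nonneg _)]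
    tauto
  rw [hset, ← Measure.restrict_apply' Q.measurableSet_set]
  have hAnn : 0 ≤ A := cubeAvg_nonneg (fun y => abs_nonneg _) Q
  -- from h1: μ {..} ≤ ofReal(vol.toReal * A) / ofReal α
  have h3 : μ {y | ENNReal.ofReal α ≤ ENNReal.ofReal |f y - c|} ≤
      ENNReal.ofReal ((volume Q.set).toReal * A) / ENNReal.ofReal α := by
    rw [ENNReal.le_div_iff_mul_le (Or.inl (by simpa using hα)) (Or.inl ENNReal.ofReal_ne_top),
      mul_comm]
    exact h1.trans h2.le
  refine h3.trans ?_
  rw [mul_comm (volume Q.set).toReal A, ENNReal.ofReal_mul hAnn,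
    ENNReal.ofReal_toReal Q.volume_set_ne_top, ENNReal.div_eq_inv_mul, ← mul_assoc,
    ENNReal.ofReal_div_of_pos hα, ENNReal.div_eq_inv_mul, mul_comm (ENNReal.ofReal α)⁻¹]

end lemmas

section medianlemmas

variable {f : Sp n → ℝ} {Q : Cube n} {s t : ℝ}

lemma median_bound (hs0 : 0 < s) (hs : s ≤ 1 / 2) (ht : 1 / 2 ≤ t) (ht1 : t ≤ 1 - s)
    (hfi : IntegrableOn f Q.set volume) :
    |median f t Q - cubeAvg f Q| ≤ 2 * cubeAvg (fun y => |f y - cubeAvg f Q|) Q / s := by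
  set c := cubeAvg f Q with hc
  set A := cubeAvg (fun y => |f y - c|) Q with hA
  have hAnn : 0 ≤ A := cubeAvg_nonneg (fun y => abs_nonneg _) Q
  set S := {M : ℝ | volume {y ∈ Q.set | f y < M} ≤ ENNReal.ofReal t * volume Q.set} with hS
  have hmed : median f t Q = sSup S := rfl
  -- basic facts about α = 2A/s + ε
  have key : ∀ ε : ℝ, 0 < ε → A / (2 * A / s + ε) < s := by
    intro ε hε
    have hα : 0 < 2 * A / s + ε := by positivity
    rw [div_lt_iff₀ hα]
    have : s * (2 * A / s + ε) = 2 * A + s * ε := by field_simp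
    nlinarith [mul_pos hs0 hε]
  have lower : ∀ ε : ℝ, 0 < ε → (c - (2 * A / s + ε)) ∈ S := by
    intro ε hε
    set α := 2 * A / s + ε with hα
    have hαpos : 0 < α := by positivity
    have hsub : {y ∈ Q.set | f y < c - α} ⊆ {y ∈ Q.set | α ≤ |f y - c|} := by
      intro y hy
      simp only [Set.mem_setOf_eq] at *
      exact ⟨hy.1, le_trans (by linarith [hy.2]) (neg_le_abs (f y - c))⟩
    refine le_trans (measure_mono hsub) (le_trans (cheb hfi c hαpos) ?_)
    exact mul_le_mul_left (ENNReal.ofReal_le_ofReal (by linarith [key ε hε])) _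
  have upper : ∀ ε : ℝ, 0 < ε → ∀ M ∈ S, M ≤ c + (2 * A / s + ε) := by
    intro ε hε M hM
    set α := 2 * A / s + ε with hα
    have hαpos : 0 < α := by positivity
    by_contra hcon
    push_neg at hcon
    have hmem : (c + α) ∈ S := by
      refine le_trans (measure_mono fun y hy => ?_) hM
      simp only [Set.mem_setOf_eq] at *
      exact ⟨hy.1, hy.2.trans hcon⟩
    have hcover : Q.set ⊆ {y ∈ Q.set | f y < c + α} ∪ {y ∈ Q.set | α ≤ |f y - c|} := by
      intro y hy
      simp only [Set.mem_union, Set.mem_setOf_eq]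
      rcases le_or_gt α |f y - c| with h | h
      · exact Or.inr ⟨hy, h⟩
      · exact Or.inl ⟨hy, by linarith [le_abs_self (f y - c)]⟩
    have hV : volume Q.set ≤ ENNReal.ofReal (t + A / α) * volume Q.set := by
      refine le_trans (measure_mono hcover) (le_trans (measure_union_le _ _) ?_)
      rw [ENNReal.ofReal_add (by linarith) (div_nonneg hAnn hαpos.le), add_mul]
      exact add_le_add hmem (cheb hfi c hαpos)
    have hlt : ENNReal.ofReal (t + A / α) * volume Q.set < 1 * volume Q.set := by
      rw [ENNReal.mul_lt_mul_iff_left Q.volume_set_pos.ne' Q.volume_set_ne_top]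
      rw [← ENNReal.ofReal_one]
      rw [ENNReal.ofReal_lt_ofReal_iff one_pos]
      linarith [key ε hε]
    rw [one_mul] at hlt
    exact absurd (lt_of_le_of_lt hV hlt) (lt_irrefl _)
  have hbdd : BddAbove S := ⟨c + (2 * A / s + 1), fun M hM => upper 1 one_pos M hM⟩
  have hne : S.Nonempty := ⟨c - (2 * A / s + 1), lower 1 one_pos⟩
  have hub : median f t Q ≤ c + 2 * A / s := by
    refine le_of_forall_pos_le_add fun ε hε => ?_
    rw [hmed]
    refine csSup_le hne fun M hM => ?_
    have := upper ε hε M hM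
    linarith
  have hlb : c - 2 * A / s ≤ median f t Q := by
    have h2 : ∀ ε : ℝ, 0 < ε → c - 2 * A / s ≤ median f t Q + ε := by
      intro ε hε
      have := le_csSup hbdd (lower ε hε)
      rw [← hmed] at this
      linarith
    refine le_of_forall_pos_le_add h2
  rw [abs_sub_le_iff]
  constructor <;> linarith

end medianlemmas

section tele

variable {f : Sp n → ℝ} {Q Q' : Cube n}

lemma integrableOn_cube (hf : LocallyIntegrable f volume) (Q : Cube n) :
    IntegrableOn f Q.set volume := hf.integrableOn_isCompact Q.isCompact_set

lemma integrableOn_abs_sub (hf : LocallyIntegrable f volume) (Q : Cube n) (c : ℝ) :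
    IntegrableOn (fun y => |f y - c|) Q.set volume :=
  ((integrableOn_cube hf Q).sub (integrableOn_const Q.volume_set_ne_top)).abs

lemma cubeAvg_sub_const (hfi : IntegrableOn f Q.set volume) (c : ℝ) :
    cubeAvg (fun y => f y - c) Q = cubeAvg f Q - c := by
  unfold cubeAvg
  rw [integral_sub hfi (integrableOn_const Q.volume_set_ne_top),
    setIntegral_const, smul_eq_mul, measureReal_def, mul_sub, ← mul_assoc,
    inv_mul_cancel₀ Q.toReal_volume_pos.ne', one_mul]

lemma abs_cubeAvg_le (g : Sp n → ℝ) (Q : Cube n) :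
    |cubeAvg g Q| ≤ cubeAvg (fun y => |g y|) Q := by
  unfold cubeAvg
  rw [abs_mul, abs_of_nonneg (inv_nonneg.2 ENNReal.toReal_nonneg)]
  have := norm_integral_le_integral_norm (μ := volume.restrict Q.set) g
  simp only [Real.norm_eq_abs] at this
  exact mul_le_mul_of_nonneg_left this (inv_nonneg.2 ENNReal.toReal_nonneg)

lemma cubeAvg_mono_subset {g : Sp n → ℝ} (hg : ∀ y, 0 ≤ g y)
    (hgi : IntegrableOn g Q'.set volume) (hsub : Q.set ⊆ Q'.set) :
    cubeAvg g Q ≤ ((volume Q'.set).toReal / (volume Q.set).toReal) * cubeAvg g Q' := by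
  have h1 : ∫ y in Q.set, g y ≤ ∫ y in Q'.set, g y :=
    setIntegral_mono_set hgi (Filter.Eventually.of_forall hg) (HasSubset.Subset.eventuallyLE hsub)
  have h2 : ((volume Q'.set).toReal / (volume Q.set).toReal) * cubeAvg g Q' =
      (volume Q.set).toReal⁻¹ * ∫ y in Q'.set, g y := by
    unfold cubeAvg
    rw [div_eq_mul_inv]
    have hv : (volume Q'.set).toReal ≠ 0 := Q'.toReal_volume_pos.ne'
    field_simp
  rw [h2]
  unfold cubeAvg
  exact mul_le_mul_of_nonneg_left h1 (inv_nonneg.2 ENNReal.toReal_nonneg)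

lemma volume_dilate_ratio (Q : Cube n) (k : ℕ) :
    (volume (Q.dilate (2 ^ (k+1) : ℝ) (by positivity)).set).toReal /
      (volume (Q.dilate (2 ^ k : ℝ) (by positivity)).set).toReal = 2 ^ n := by
  rw [Cube.volume_set, Cube.volume_set]
  show (ENNReal.ofReal (((2:ℝ) ^ (k+1) * Q.side) ^ n)).toReal /
      (ENNReal.ofReal (((2:ℝ) ^ k * Q.side) ^ n)).toReal = 2 ^ n
  have h1 : (0:ℝ) < ((2:ℝ) ^ (k+1) * Q.side) ^ n := pow_pos (mul_pos (by positivity) Q.side_pos) n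
  have h2 : (0:ℝ) < ((2:ℝ) ^ k * Q.side) ^ n := pow_pos (mul_pos (by positivity) Q.side_pos) n
  rw [ENNReal.toReal_ofReal h1.le, ENNReal.toReal_ofReal h2.le]
  rw [pow_succ, mul_comm ((2:ℝ)^k) 2, mul_assoc, mul_pow, mul_div_assoc,
    div_self h2.ne', mul_one]

lemma tele_step (hf : LocallyIntegrable f volume) (Q : Cube n) (k : ℕ) :
    |cubeAvg f (Q.dilate (2 ^ k : ℝ) (by positivity)) -
      cubeAvg f (Q.dilate (2 ^ (k+1) : ℝ) (by positivity))| ≤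
    2 ^ n * cubeAvg
      (fun y => |f y - cubeAvg f (Q.dilate (2 ^ (k+1) : ℝ) (by positivity))|)
      (Q.dilate (2 ^ (k+1) : ℝ) (by positivity)) := by
  set P := Q.dilate (2 ^ k : ℝ) (by positivity) with hP
  set P' := Q.dilate (2 ^ (k+1) : ℝ) (by positivity) with hP'
  set c := cubeAvg f P' with hc
  have hsub : P.set ⊆ P'.set := Q.dilate_subset _ _ (by
    have : (2:ℝ) ^ k ≤ 2 ^ (k+1) := by
      apply pow_le_pow_right₀ one_le_two (Nat.le_succ k)
    exact this)
  calc |cubeAvg f P - c| = |cubeAvg (fun y => f y - c) P| := by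
        rw [cubeAvg_sub_const (integrableOn_cube hf P) c]
    _ ≤ cubeAvg (fun y => |f y - c|) P := abs_cubeAvg_le _ _
    _ ≤ ((volume P'.set).toReal / (volume P.set).toReal) * cubeAvg (fun y => |f y - c|) P' :=
        cubeAvg_mono_subset (fun y => abs_nonneg _) (integrableOn_abs_sub hf P' c) hsub
    _ = 2 ^ n * cubeAvg (fun y => |f y - c|) P' := by rw [volume_dilate_ratio]

end tele

/-- The dilated cube `2^j Q`. -/
noncomputable def dyCube (Q : Cube n) (j : ℕ) : Cube n := Q.dilate (2 ^ j) (by positivity)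

lemma mem_dyCube {Q : Cube n} {y : Sp n} (hy : y ∈ Q.set) (j : ℕ) : y ∈ (dyCube Q j).set :=
  Q.subset_dilate (by positivity) (one_le_pow₀ one_le_two) hy

lemma dyCube_zero_set (Q : Cube n) : (dyCube Q 0).set = Q.set :=
  Q.dilate_one_set (by positivity) (pow_zero 2)

theorem statement10' {f : Sp n → ℝ} {s t : ℝ} (hs0 : 0 < s) (hs : s ≤ 1 / 2)
    (ht : 1 / 2 ≤ t) (ht1 : t ≤ 1 - s)
    (Q : Cube n) (m : ℕ) (hf : LocallyIntegrable f volume) :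
    (∫⁻ y in (dyCube Q m).set, ENNReal.ofReal |f y - median f t Q|)
      ≤ ENNReal.ofReal ((1 + 2^n + 2/s) * (1 + m)) *
          volume (dyCube Q m).set * ⨅ y : Q.set, fsSharp f ↑y := by
  set c0 : ℝ := 1 + 2^n + 2/s with hc0
  have hc0pos : 0 < c0 := by positivity
  set K := ENNReal.ofReal (c0 * (1 + m)) * volume (dyCube Q m).set with hK
  have hK0 : K ≠ 0 := by
    refine mul_ne_zero ?_ (dyCube Q m).volume_set_pos.ne'
    exact (ENNReal.ofReal_pos.2 (by positivity)).ne'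
  have hKtop : K ≠ ⊤ := ENNReal.mul_ne_top ENNReal.ofReal_ne_top (dyCube Q m).volume_set_ne_top
  rw [show ENNReal.ofReal (c0 * (1 + m)) * volume (dyCube Q m).set *
      (⨅ y : Q.set, fsSharp f ↑y) = ⨅ y : Q.set, K * fsSharp f ↑y from
    ENNReal.mul_iInf_of_ne hK0 hKtop]
  refine le_iInf fun y => ?_
  by_cases hF : fsSharp f ↑y = ⊤
  · rw [hF, ENNReal.mul_top hK0]; exact le_top
  set β := (fsSharp f ↑y).toReal with hβ
  have hβnn : 0 ≤ β := ENNReal.toReal_nonneg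
  set med := median f t Q with hmed
  set cm := cubeAvg f (dyCube Q m) with hcm
  -- bounds via fsSharp
  have hbound : ∀ j : ℕ, cubeAvg (fun z => |f z - cubeAvg f (dyCube Q j)|) (dyCube Q j) ≤ β :=
    fun j => (ENNReal.ofReal_le_iff_le_toReal hF).1 (ofReal_cubeAvg_le_fsSharp (mem_dyCube y.2 j))
  have hboundQ : cubeAvg (fun z => |f z - cubeAvg f Q|) Q ≤ β :=
    (ENNReal.ofReal_le_iff_le_toReal hF).1 (ofReal_cubeAvg_le_fsSharp y.2)
  have h2n : (0:ℝ) ≤ 2 ^ n := by positivity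
  -- telescoping
  have htel : ∀ j : ℕ, |cubeAvg f (dyCube Q 0) - cubeAvg f (dyCube Q j)| ≤ j * (2^n * β) := by
    intro j
    induction j with
    | zero => simp
    | succ k ih =>
      have h1 : |cubeAvg f (dyCube Q k) - cubeAvg f (dyCube Q (k+1))| ≤
          2 ^ n * cubeAvg (fun z => |f z - cubeAvg f (dyCube Q (k+1))|) (dyCube Q (k+1)) :=
        tele_step hf Q k
      have h2 := hbound (k+1)
      have h3 := abs_sub_le (cubeAvg f (dyCube Q 0)) (cubeAvg f (dyCube Q k))
        (cubeAvg f (dyCube Q (k+1)))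
      push_cast
      nlinarith [mul_le_mul_of_nonneg_left h2 h2n]
  -- median
  have hmedb : |med - cubeAvg f Q| ≤ 2 * cubeAvg (fun z => |f z - cubeAvg f Q|) Q / s :=
    median_bound hs0 hs ht ht1 (integrableOn_cube hf Q)
  have havg0 : cubeAvg f (dyCube Q 0) = cubeAvg f Q := cubeAvg_congr_set (dyCube_zero_set Q)
  have hcmmed : |cm - med| ≤ m * (2^n*β) + 2*β/s := by
    have h4 := htel m
    rw [havg0] at h4
    have h5 : 2 * cubeAvg (fun z => |f z - cubeAvg f Q|) Q / s ≤ 2*β/s := by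
      gcongr
    have h6 := abs_sub_le cm (cubeAvg f Q) med
    rw [abs_sub_comm cm (cubeAvg f Q)] at h6
    rw [abs_sub_comm (cubeAvg f Q) med] at h6
    linarith
  -- real integral estimate
  set Pm := dyCube Q m with hPm
  set Vm := (volume Pm.set).toReal with hVm
  have hVmpos : 0 < Vm := Pm.toReal_volume_pos
  have hint1 : IntegrableOn (fun y => |f y - med|) Pm.set volume := integrableOn_abs_sub hf Pm med
  have hint2 : IntegrableOn (fun y => |f y - cm|) Pm.set volume := integrableOn_abs_sub hf Pm cm
  have hIle : ∫ z in Pm.set, |f z - med| ≤ Vm * cubeAvg (fun z => |f z - cm|) Pm + Vm * |cm - med| := by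
    have hptw : ∀ z, |f z - med| ≤ |f z - cm| + |cm - med| := fun z => abs_sub_le _ _ _
    have := integral_mono hint1
      (hint2.add (integrableOn_const Pm.volume_set_ne_top)) hptw
    simp only [Pi.add_apply] at this
    rw [integral_add hint2 (integrableOn_const Pm.volume_set_ne_top),
      setIntegral_const, smul_eq_mul,
      integral_eq_vol_mul_cubeAvg (fun z => |f z - cm|) Pm] at this
    exact this
  have hItot : ∫ z in Pm.set, |f z - med| ≤ Vm * ((1 + m * 2^n + 2/s) * β) := by
    have hAm := hbound m
    have : Vm * cubeAvg (fun z => |f z - cm|) Pm + Vm * |cm - med| ≤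
        Vm * β + Vm * (m * (2^n*β) + 2*β/s) := by
      have := hcmmed
      nlinarith
    have heq : Vm * β + Vm * (m * (2^n*β) + 2*β/s) = Vm * ((1 + m * 2^n + 2/s) * β) := by
      field_simp
      ring
    linarith
  have hcoef : (1 + m * 2^n + 2/s) * β ≤ (c0 * (1 + m)) * β := by
    have h2si : (0:ℝ) ≤ 2/s := by positivity
    have hm0 : (0:ℝ) ≤ m := Nat.cast_nonneg m
    have : (1 + m * 2^n + 2/s) ≤ c0 * (1 + m) := by
      rw [hc0]
      nlinarith [mul_nonneg hm0 h2si, mul_nonneg hm0 h2n]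
    exact mul_le_mul_of_nonneg_right this hβnn
  -- pass to ENNReal
  have hlhs : (∫⁻ z in Pm.set, ENNReal.ofReal |f z - med|) =
      ENNReal.ofReal (∫ z in Pm.set, |f z - med|) :=
    (ofReal_integral_eq_lintegral_ofReal hint1
      (Filter.Eventually.of_forall fun z => abs_nonneg _)).symm
  rw [hlhs]
  calc ENNReal.ofReal (∫ z in Pm.set, |f z - med|)
      ≤ ENNReal.ofReal ((c0 * (1 + m)) * (Vm * β)) := by
        refine ENNReal.ofReal_le_ofReal ?_
        have h7 := mul_le_mul_of_nonneg_left hcoef hVmpos.le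
        have h8 : Vm * (c0 * (1 + ↑m) * β) = c0 * (1 + ↑m) * (Vm * β) := by ring
        exact le_trans hItot (le_of_le_of_eq h7 h8)
    _ = ENNReal.ofReal (c0 * (1 + m)) * (ENNReal.ofReal Vm * ENNReal.ofReal β) := by
        rw [ENNReal.ofReal_mul (by positivity), ENNReal.ofReal_mul hVmpos.le]
    _ = K * fsSharp f ↑y := by
        rw [hVm, ENNReal.ofReal_toReal Pm.volume_set_ne_top, hβ,
          ENNReal.ofReal_toReal hF, hK, mul_assoc]


/-- Let `0 < s ≤ 1/2` and `1/2 ≤ t ≤ 1 − s`. There is `c_{n,s} > 0`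
such that for every cube `Q ⊂ ℝⁿ`, every integer `m ≥ 0`, and every locally
integrable `f`:
`∫_{2^m Q} |f(y) − m_f(t,Q)| dy ≤ c_{n,s} (1 + m) |2^m Q| inf_{y ∈ Q} M♯f(y)`. -/
theorem statement10 {n : ℕ} (s t : ℝ) (hs0 : 0 < s) (hs : s ≤ 1 / 2)
    (ht : 1 / 2 ≤ t) (ht1 : t ≤ 1 - s) :
    ∃ c : ℝ, 0 < c ∧
      ∀ (Q : Cube n) (m : ℕ) (f : Sp n → ℝ), LocallyIntegrable f volume →
        (∫⁻ y in (Q.dilate (2 ^ m) (by positivity)).set,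
            ENNReal.ofReal |f y - median f t Q|)
          ≤ ENNReal.ofReal (c * (1 + m)) *
              volume (Q.dilate (2 ^ m) (by positivity)).set *
                ⨅ y : Q.set, fsSharp f ↑y := by
  refine ⟨1 + 2^n + 2/s, by positivity, ?_⟩
  intro Q m f hf
  exact statement10' hs0 hs ht ht1 Q m hf

end LocalMedian
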